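/- There exists a countably infinite commutative semigroup S with a zero element 0 such that S is ℵ₀-categorical, a·a = 0 for every a ∈ S (so S is nil of degree 2), and S·S = S; in particular, S is nil but not nilpotent (S^n ≠ {0} for every n ≥ 1). -/

import Mathlib

/-- Two `n`-tuples of a semigroup are automorphically equivalent if some semigroup
automorphism maps one to the other componentwise. -/
def AutRel (S : Type*) [Semigroup S] {n : ℕ} (a b : Fin n → S) : Prop :=
  ∃ φ : S ≃* S, ∀ k, φ (a k) = b k

/-- A semigroup is ℵ₀-categorical if, for every `n ≥ 1`, the action of its automorphism
group on `n`-tuples has only finitely many orbits. -/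
def Aleph0Categorical (S : Type*) [Semigroup S] : Prop :=
  ∀ n : ℕ, 1 ≤ n → ∃ t : Set (Fin n → S), t.Finite ∧
    ∀ a : Fin n → S, ∃ b ∈ t, AutRel S b a

/-- `prodSet S n` is the set `S^(n+1)` of all products of `n+1` elements of `S`. -/
def prodSet (S : Type*) [Semigroup S] : ℕ → Set S
  | 0 => Set.univ
  | n + 1 => {x | ∃ a ∈ prodSet S n, ∃ b : S, x = a * b}

noncomputable section AFSG

attribute [local instance] Classical.propDecidable

abbrev Iq (p : ℚ × ℚ) : Set ℚ := Set.Ico p.1 p.2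

def DU : List (ℚ × ℚ) → Set ℚ
  | [] => ∅
  | p :: l => Iq p ∪ DU l

def Bq : Set (Set ℚ) := Set.range DU

lemma DU_append (l₁ l₂ : List (ℚ × ℚ)) : DU (l₁ ++ l₂) = DU l₁ ∪ DU l₂ := by
  induction l₁ with
  | nil => simp [DU]
  | cons p l ih => simp [DU, ih, Set.union_assoc]

lemma empty_mem_Bq : (∅ : Set ℚ) ∈ Bq := ⟨[], rfl⟩

lemma Ico_mem_Bq (p q : ℚ) : Set.Ico p q ∈ Bq := ⟨[(p, q)], by simp [DU]⟩

lemma Bq_union {A B : Set ℚ} (hA : A ∈ Bq) (hB : B ∈ Bq) : A ∪ B ∈ Bq := by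
  obtain ⟨l₁, rfl⟩ := hA; obtain ⟨l₂, rfl⟩ := hB
  exact ⟨l₁ ++ l₂, DU_append l₁ l₂⟩

lemma Iq_inter_DU (p : ℚ × ℚ) (l : List (ℚ × ℚ)) :
    Iq p ∩ DU l = DU (l.map (fun q => (p.1 ⊔ q.1, p.2 ⊓ q.2))) := by
  induction l with
  | nil => simp [DU]
  | cons q l ih =>
      simp only [DU, List.map_cons, Set.inter_union_distrib_left, ih, Iq, Set.Ico_inter_Ico]

lemma Bq_inter {A B : Set ℚ} (hA : A ∈ Bq) (hB : B ∈ Bq) : A ∩ B ∈ Bq := by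
  obtain ⟨l₁, rfl⟩ := hA; obtain ⟨l₂, rfl⟩ := hB
  induction l₁ with
  | nil => simpa [DU] using empty_mem_Bq
  | cons p l ih =>
      rw [DU, Set.union_inter_distrib_right]
      exact Bq_union ⟨_, (Iq_inter_DU p l₂).symm⟩ ih

lemma Iq_diff_Iq (p q : ℚ × ℚ) :
    Iq p \ Iq q = Set.Ico p.1 (p.2 ⊓ q.1) ∪ Set.Ico (p.1 ⊔ q.2) p.2 := by
  ext x
  simp only [Iq, Set.mem_diff, Set.mem_Ico, Set.mem_union, lt_inf_iff, sup_le_iff, not_and,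
    not_lt]
  constructor
  · rintro ⟨⟨h1, h2⟩, h3⟩
    rcases lt_or_ge x q.1 with h | h
    · exact Or.inl ⟨h1, h2, h⟩
    · exact Or.inr ⟨⟨h1, h3 h⟩, h2⟩
  · rintro (⟨h1, h2, h3⟩ | ⟨⟨h1, h2⟩, h3⟩)
    · exact ⟨⟨h1, h2⟩, fun hq => absurd hq (not_le.2 h3)⟩
    · exact ⟨⟨h1, h3⟩, fun _ => h2⟩

lemma Bq_diff_Iq {A : Set ℚ} (hA : A ∈ Bq) (q : ℚ × ℚ) : A \ Iq q ∈ Bq := by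
  obtain ⟨l, rfl⟩ := hA
  induction l with
  | nil => simpa [DU] using empty_mem_Bq
  | cons p l ih =>
      rw [DU, Set.union_diff_distrib]
      exact Bq_union (by rw [Iq_diff_Iq]; exact Bq_union (Ico_mem_Bq _ _) (Ico_mem_Bq _ _)) ih

lemma Bq_diff {A B : Set ℚ} (hA : A ∈ Bq) (hB : B ∈ Bq) : A \ B ∈ Bq := by
  obtain ⟨l, rfl⟩ := hB
  induction l generalizing A with
  | nil => simpa [DU] using hA
  | cons q l ih =>
      rw [DU, ← Set.diff_diff]
      exact ih (Bq_diff_Iq hA q)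

lemma DU_bound (l : List (ℚ × ℚ)) : ∃ M : ℚ, 0 ≤ M ∧ DU l ⊆ Set.Ico (-M) M := by
  induction l with
  | nil => exact ⟨0, le_refl _, by simp [DU]⟩
  | cons p l ih =>
      obtain ⟨M, hM0, hM⟩ := ih
      refine ⟨M ⊔ (-p.1 ⊔ p.2), le_trans hM0 le_sup_left, ?_⟩
      rw [DU]
      apply Set.union_subset
      · apply Set.Ico_subset_Ico
        · rw [neg_le]; exact le_sup_of_le_right le_sup_left
        · exact le_sup_of_le_right le_sup_right
      · refine hM.trans (Set.Ico_subset_Ico ?_ le_sup_left)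
        simp only [neg_le_neg_iff]; exact le_sup_left

lemma Bq_bound {A : Set ℚ} (hA : A ∈ Bq) : ∃ M : ℚ, 0 ≤ M ∧ A ⊆ Set.Ico (-M) M := by
  obtain ⟨l, rfl⟩ := hA; exact DU_bound l

lemma DU_mem_iff {x : ℚ} {l : List (ℚ × ℚ)} : x ∈ DU l ↔ ∃ p ∈ l, x ∈ Iq p := by
  induction l with
  | nil => simp [DU]
  | cons p l ih => simp [DU, ih]

lemma Iq_subset_DU {p : ℚ × ℚ} {l : List (ℚ × ℚ)} (hp : p ∈ l) : Iq p ⊆ DU l :=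
  fun x hx => DU_mem_iff.2 ⟨p, hp, hx⟩


-- chunk 2 proper
def NiceL (l : List (ℚ × ℚ)) : Prop :=
  l.Pairwise (fun p q => Disjoint (Iq p) (Iq q)) ∧ ∀ p ∈ l, p.1 < p.2

lemma disj_of_sep {A B : Set ℚ} {c : ℚ} (hA : A ⊆ Set.Iio c) (hB : B ⊆ Set.Ici c) :
    Disjoint A B := by
  rw [Set.disjoint_left]
  intro x hx hx'
  exact absurd (Set.mem_Ici.1 (hB hx')) (not_le.2 (Set.mem_Iio.1 (hA hx)))

lemma disjoint_DU {A : Set ℚ} {t : List (ℚ × ℚ)} (h : ∀ r ∈ t, Disjoint A (Iq r)) :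
    Disjoint A (DU t) := by
  induction t with
  | nil => simp [DU]
  | cons r s ih =>
      rw [DU, Set.disjoint_union_right]
      exact ⟨h r (by simp), ih fun r' h' => h r' (by simp [h'])⟩

/-- the two pieces of `Iq r \ Iq p` -/
def trimB (p : ℚ × ℚ) (l : List (ℚ × ℚ)) : List (ℚ × ℚ) :=
  l.flatMap fun r => [(r.1, r.2 ⊓ p.1), (r.1 ⊔ p.2, r.2)]

lemma DU_trimB (p : ℚ × ℚ) (l : List (ℚ × ℚ)) : DU (trimB p l) = DU l \ Iq p := by
  induction l with
  | nil => simp [DU, trimB]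
  | cons r t ih =>
      show DU ((r.1, r.2 ⊓ p.1) :: (r.1 ⊔ p.2, r.2) :: trimB p t) = _
      rw [DU, DU, ih, DU, Set.union_diff_distrib, Iq_diff_Iq, Set.union_assoc]

lemma piece1_subset (p r : ℚ × ℚ) : Iq ((r.1, r.2 ⊓ p.1)) ⊆ Iq r :=
  Set.Ico_subset_Ico le_rfl inf_le_left

lemma piece2_subset (p r : ℚ × ℚ) : Iq ((r.1 ⊔ p.2, r.2)) ⊆ Iq r :=
  Set.Ico_subset_Ico le_sup_left le_rfl

lemma piece1_lo (p r : ℚ × ℚ) : Iq ((r.1, r.2 ⊓ p.1)) ⊆ Set.Iio p.1 :=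
  fun x hx => lt_of_lt_of_le hx.2 inf_le_right

lemma piece2_hi (p r : ℚ × ℚ) : Iq ((r.1 ⊔ p.2, r.2)) ⊆ Set.Ici p.2 :=
  fun x hx => le_trans le_sup_right hx.1

lemma mem_trimB {p : ℚ × ℚ} {l : List (ℚ × ℚ)} {e : ℚ × ℚ} (he : e ∈ trimB p l) :
    ∃ r ∈ l, e = (r.1, r.2 ⊓ p.1) ∨ e = (r.1 ⊔ p.2, r.2) := by
  rw [trimB, List.mem_flatMap] at he
  obtain ⟨r, hr, he⟩ := he
  simp only [List.mem_cons, List.mem_singleton, List.not_mem_nil, or_false] at he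
  exact ⟨r, hr, he⟩

lemma trimB_pairwise {p : ℚ × ℚ} (hp : p.1 ≤ p.2) {l : List (ℚ × ℚ)}
    (hl : l.Pairwise (fun p q => Disjoint (Iq p) (Iq q))) :
    (trimB p l).Pairwise (fun p q => Disjoint (Iq p) (Iq q)) := by
  induction l with
  | nil => simp [trimB]
  | cons r t ih =>
      rw [List.pairwise_cons] at hl
      show ((r.1, r.2 ⊓ p.1) :: (r.1 ⊔ p.2, r.2) :: trimB p t).Pairwise _
      have hcross : ∀ e ∈ trimB p t, ∀ (x : ℚ × ℚ), Iq x ⊆ Iq r → Disjoint (Iq x) (Iq e) := by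
        intro e he x hxr
        obtain ⟨r', hr', he⟩ := mem_trimB he
        have hd : Disjoint (Iq r) (Iq r') := hl.1 r' hr'
        rcases he with rfl | rfl
        · exact (hd.mono hxr (piece1_subset p r')) 
        · exact (hd.mono hxr (piece2_subset p r'))
      refine List.Pairwise.cons ?_ (List.Pairwise.cons ?_ (ih hl.2))
      · intro e he
        rcases List.mem_cons.1 he with rfl | he
        · exact disj_of_sep (piece1_lo p r) ((piece2_hi p r).trans (Set.Ici_subset_Ici.2 hp))
        · exact hcross e he _ (piece1_subset p r)
      · intro e he
        exact hcross e he _ (piece2_subset p r)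

lemma DU_filter (l : List (ℚ × ℚ)) : DU (l.filter fun r => r.1 < r.2) = DU l := by
  induction l with
  | nil => simp [DU]
  | cons r t ih =>
      by_cases h : r.1 < r.2
      · rw [List.filter_cons_of_pos (by simpa using h), DU, DU, ih]
      · rw [List.filter_cons_of_neg (by simpa using h), DU, ih,
          show Iq r = ∅ from Set.Ico_eq_empty h, Set.empty_union]

lemma exists_nice {A : Set ℚ} (hA : A ∈ Bq) : ∃ l, NiceL l ∧ DU l = A := by
  obtain ⟨l, rfl⟩ := hA
  induction l with
  | nil => exact ⟨[], ⟨List.Pairwise.nil, by simp⟩, rfl⟩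
  | cons p t ih =>
      obtain ⟨l', ⟨hl'p, hl'ne⟩, hl'⟩ := ih
      by_cases hp : p.1 < p.2
      · refine ⟨p :: ((trimB p l').filter fun r => r.1 < r.2), ⟨?_, ?_⟩, ?_⟩
        · refine List.Pairwise.cons ?_ (List.Pairwise.sublist List.filter_sublist (trimB_pairwise hp.le hl'p))
          intro e he
          obtain ⟨r, _, he⟩ := mem_trimB (List.mem_of_mem_filter he)
          rcases he with rfl | rfl
          · exact (disj_of_sep (piece1_lo p r) (fun x hx => hx.1)).symm
          · exact disj_of_sep (fun x hx => hx.2) (piece2_hi p r)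
        · intro r hr
          rcases List.mem_cons.1 hr with rfl | hr
          · exact hp
          · simpa using List.of_mem_filter hr
        · rw [DU, DU_filter, DU_trimB, hl', Set.union_diff_self, DU]
      · refine ⟨l', ⟨hl'p, hl'ne⟩, ?_⟩
        rw [DU, show Iq p = ∅ from Set.Ico_eq_empty hp, Set.empty_union, hl']

lemma affine_image (r s : ℚ) (hr : 0 < r) (u v : ℚ) :
    (fun x => x * r + s) '' Set.Ico u v = Set.Ico (u * r + s) (v * r + s) := by
  ext y
  simp only [Set.mem_image, Set.mem_Ico]
  constructor
  · rintro ⟨x, ⟨h1, h2⟩, rfl⟩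
    constructor
    · have := mul_le_mul_of_nonneg_right h1 hr.le; linarith
    · have := mul_lt_mul_of_pos_right h2 hr; linarith
  · rintro ⟨h1, h2⟩
    refine ⟨(y - s) / r, ⟨?_, ?_⟩, by field_simp; ring⟩
    · rw [le_div_iff₀ hr]; linarith
    · rw [div_lt_iff₀ hr]; linarith

structure IsGB (U V : Set ℚ) (f g : ℚ → ℚ) : Prop where
  mapsf : ∀ x ∈ U, f x ∈ V
  mapsg : ∀ y ∈ V, g y ∈ U
  gf : ∀ x ∈ U, g (f x) = x
  fg : ∀ y ∈ V, f (g y) = y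
  goodf : ∀ p q : ℚ, f '' (Set.Ico p q ∩ U) ∈ Bq
  goodg : ∀ p q : ℚ, g '' (Set.Ico p q ∩ V) ∈ Bq

def ExGB (U V : Set ℚ) : Prop := ∃ f g, IsGB U V f g

lemma ExGB.symm {U V : Set ℚ} (h : ExGB U V) : ExGB V U := by
  obtain ⟨f, g, h⟩ := h
  exact ⟨g, f, ⟨h.mapsg, h.mapsf, h.fg, h.gf, h.goodg, h.goodf⟩⟩

lemma exGB_empty : ExGB ∅ ∅ :=
  ⟨id, id, ⟨fun x hx => hx, fun x hx => hx, fun _ _ => rfl, fun _ _ => rfl,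
    fun p q => by simpa using empty_mem_Bq, fun p q => by simpa using empty_mem_Bq⟩⟩

lemma exGB_Ico {p q p' q' : ℚ} (h : p < q) (h' : p' < q') :
    ExGB (Set.Ico p q) (Set.Ico p' q') := by
  obtain ⟨r, hr, hqr⟩ : ∃ r : ℚ, 0 < r ∧ (q - p) * r = q' - p' := by
    refine ⟨(q' - p') / (q - p), div_pos (by linarith) (by linarith), ?_⟩
    have hqp : q - p ≠ 0 := sub_ne_zero.2 (ne_of_gt h)
    field_simp
  have hrne : r ≠ 0 := ne_of_gt hr
  have hr' : 0 < r⁻¹ := inv_pos.2 hr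
  have key1 : p * r + (p' - p * r) = p' := by ring
  have key2 : q * r + (p' - p * r) = q' := by linear_combination hqr
  have key1' : p' * r⁻¹ + (p - p' * r⁻¹) = p := by ring
  have key2' : q' * r⁻¹ + (p - p' * r⁻¹) = q := by
    have h2 : (q' - p') * r⁻¹ = q - p := by
      rw [← hqr, mul_assoc, mul_inv_cancel₀ hrne, mul_one]
    linear_combination h2
  have himg : (fun x => x * r + (p' - p * r)) '' Set.Ico p q = Set.Ico p' q' := by
    rw [affine_image r _ hr, key1, key2]
  have himg' : (fun y => y * r⁻¹ + (p - p' * r⁻¹)) '' Set.Ico p' q' = Set.Ico p q := by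
    rw [affine_image _ _ hr', key1', key2']
  have hgf : ∀ x : ℚ, (x * r + (p' - p * r)) * r⁻¹ + (p - p' * r⁻¹) = x := by
    intro x; field_simp; ring
  have hfg : ∀ y : ℚ, (y * r⁻¹ + (p - p' * r⁻¹)) * r + (p' - p * r) = y := by
    intro y; field_simp; ring
  refine ⟨fun x => x * r + (p' - p * r), fun y => y * r⁻¹ + (p - p' * r⁻¹), ?_, ?_,
    fun x _ => hgf x, fun y _ => hfg y, ?_, ?_⟩
  · intro x hx; rw [← himg]; exact Set.mem_image_of_mem _ hx
  · intro y hy; rw [← himg']; exact Set.mem_image_of_mem _ hy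
  · intro a b
    rw [Set.Ico_inter_Ico, affine_image r _ hr]
    exact Ico_mem_Bq _ _
  · intro a b
    rw [Set.Ico_inter_Ico, affine_image _ _ hr']
    exact Ico_mem_Bq _ _

lemma translate_image (t u v : ℚ) : (fun x => x + t) '' Set.Ico u v = Set.Ico (u + t) (v + t) := by
  have := affine_image 1 t one_pos u v
  simpa using this

lemma exGB_Iio (m m' : ℚ) : ExGB (Set.Iio m) (Set.Iio m') := by
  refine ⟨fun x => x + (m' - m), fun y => y + (m - m'), ?_, ?_, ?_, ?_, ?_, ?_⟩
  · intro x hx; simp only [Set.mem_Iio] at *; linarith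
  · intro y hy; simp only [Set.mem_Iio] at *; linarith
  · intro x _; ring
  · intro y _; ring
  · intro a b
    have : Set.Ico a b ∩ Set.Iio m = Set.Ico a (b ⊓ m) := by
      ext x; simp only [Set.mem_inter_iff, Set.mem_Ico, Set.mem_Iio, lt_inf_iff]; tauto
    rw [this, translate_image]; exact Ico_mem_Bq _ _
  · intro a b
    have : Set.Ico a b ∩ Set.Iio m' = Set.Ico a (b ⊓ m') := by
      ext x; simp only [Set.mem_inter_iff, Set.mem_Ico, Set.mem_Iio, lt_inf_iff]; tauto
    rw [this, translate_image]; exact Ico_mem_Bq _ _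

lemma exGB_Ici (m m' : ℚ) : ExGB (Set.Ici m) (Set.Ici m') := by
  refine ⟨fun x => x + (m' - m), fun y => y + (m - m'), ?_, ?_, ?_, ?_, ?_, ?_⟩
  · intro x hx; simp only [Set.mem_Ici] at *; linarith
  · intro y hy; simp only [Set.mem_Ici] at *; linarith
  · intro x _; ring
  · intro y _; ring
  · intro a b
    have : Set.Ico a b ∩ Set.Ici m = Set.Ico (a ⊔ m) b := by
      ext x; simp only [Set.mem_inter_iff, Set.mem_Ico, Set.mem_Ici, sup_le_iff]; tauto
    rw [this, translate_image]; exact Ico_mem_Bq _ _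
  · intro a b
    have : Set.Ico a b ∩ Set.Ici m' = Set.Ico (a ⊔ m') b := by
      ext x; simp only [Set.mem_inter_iff, Set.mem_Ico, Set.mem_Ici, sup_le_iff]; tauto
    rw [this, translate_image]; exact Ico_mem_Bq _ _

lemma ExGB.glue {U₁ V₁ U₂ V₂ : Set ℚ} (h1 : ExGB U₁ V₁) (h2 : ExGB U₂ V₂)
    (hU : Disjoint U₁ U₂) (hV : Disjoint V₁ V₂) : ExGB (U₁ ∪ U₂) (V₁ ∪ V₂) := by
  obtain ⟨f₁, g₁, H1⟩ := h1
  obtain ⟨f₂, g₂, H2⟩ := h2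
  set f : ℚ → ℚ := fun x => if x ∈ U₁ then f₁ x else f₂ x with hf
  set g : ℚ → ℚ := fun y => if y ∈ V₁ then g₁ y else g₂ y with hg
  have hfc : ∀ x ∈ U₁, f x = f₁ x := fun x hx => if_pos hx
  have hfc' : ∀ x ∈ U₂, f x = f₂ x := fun x hx => if_neg (Set.disjoint_right.1 hU hx)
  have hgc : ∀ y ∈ V₁, g y = g₁ y := fun y hy => if_pos hy
  have hgc' : ∀ y ∈ V₂, g y = g₂ y := fun y hy => if_neg (Set.disjoint_right.1 hV hy)
  have himgf : ∀ p q : ℚ, f '' (Set.Ico p q ∩ (U₁ ∪ U₂)) =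
      f₁ '' (Set.Ico p q ∩ U₁) ∪ f₂ '' (Set.Ico p q ∩ U₂) := by
    intro p q
    ext y
    simp only [Set.mem_image, Set.mem_union, Set.mem_inter_iff]
    constructor
    · rintro ⟨x, ⟨hpq, hx⟩, rfl⟩
      rcases hx with hx | hx
      · exact Or.inl ⟨x, ⟨hpq, hx⟩, (hfc x hx).symm⟩
      · exact Or.inr ⟨x, ⟨hpq, hx⟩, (hfc' x hx).symm⟩
    · rintro (⟨x, ⟨hpq, hx⟩, rfl⟩ | ⟨x, ⟨hpq, hx⟩, rfl⟩)
      · exact ⟨x, ⟨hpq, Or.inl hx⟩, hfc x hx⟩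
      · exact ⟨x, ⟨hpq, Or.inr hx⟩, hfc' x hx⟩
  have himgg : ∀ p q : ℚ, g '' (Set.Ico p q ∩ (V₁ ∪ V₂)) =
      g₁ '' (Set.Ico p q ∩ V₁) ∪ g₂ '' (Set.Ico p q ∩ V₂) := by
    intro p q
    ext y
    simp only [Set.mem_image, Set.mem_union, Set.mem_inter_iff]
    constructor
    · rintro ⟨x, ⟨hpq, hx⟩, rfl⟩
      rcases hx with hx | hx
      · exact Or.inl ⟨x, ⟨hpq, hx⟩, (hgc x hx).symm⟩
      · exact Or.inr ⟨x, ⟨hpq, hx⟩, (hgc' x hx).symm⟩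
    · rintro (⟨x, ⟨hpq, hx⟩, rfl⟩ | ⟨x, ⟨hpq, hx⟩, rfl⟩)
      · exact ⟨x, ⟨hpq, Or.inl hx⟩, hgc x hx⟩
      · exact ⟨x, ⟨hpq, Or.inr hx⟩, hgc' x hx⟩
  refine ⟨f, g, ?_, ?_, ?_, ?_, ?_, ?_⟩
  · intro x hx
    rcases hx with hx | hx
    · rw [hfc x hx]; exact Or.inl (H1.mapsf x hx)
    · rw [hfc' x hx]; exact Or.inr (H2.mapsf x hx)
  · intro y hy
    rcases hy with hy | hy
    · rw [hgc y hy]; exact Or.inl (H1.mapsg y hy)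
    · rw [hgc' y hy]; exact Or.inr (H2.mapsg y hy)
  · intro x hx
    rcases hx with hx | hx
    · rw [hfc x hx, hgc _ (H1.mapsf x hx)]; exact H1.gf x hx
    · rw [hfc' x hx, hgc' _ (H2.mapsf x hx)]; exact H2.gf x hx
  · intro y hy
    rcases hy with hy | hy
    · rw [hgc y hy, hfc _ (H1.mapsg y hy)]; exact H1.fg y hy
    · rw [hgc' y hy, hfc' _ (H2.mapsg y hy)]; exact H2.fg y hy
  · intro p q; rw [himgf]; exact Bq_union (H1.goodf p q) (H2.goodf p q)
  · intro p q; rw [himgg]; exact Bq_union (H1.goodg p q) (H2.goodg p q)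

-- chunk 4
lemma niceL_cons {x : ℚ × ℚ} {t : List (ℚ × ℚ)} (h : NiceL (x :: t)) :
    NiceL t ∧ x.1 < x.2 ∧ Disjoint (Iq x) (DU t) := by
  obtain ⟨hp, hne⟩ := h
  rw [List.pairwise_cons] at hp
  exact ⟨⟨hp.2, fun p hp' => hne p (List.mem_cons_of_mem _ hp')⟩,
    hne x List.mem_cons_self, disjoint_DU fun r hr => hp.1 r hr⟩

lemma exGB_Ico_DU : ∀ l : List (ℚ × ℚ), NiceL l → l ≠ [] →
    ∀ p q : ℚ, p < q → ExGB (Set.Ico p q) (DU l) := by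
  intro l
  induction l with
  | nil => intro _ h; exact absurd rfl h
  | cons x t ih =>
      intro hn _ p q hpq
      obtain ⟨hnt, hx, hdisj⟩ := niceL_cons hn
      cases t with
      | nil =>
          show ExGB _ (Iq x ∪ DU [])
          rw [show DU [] = ∅ from rfl, Set.union_empty]
          exact exGB_Ico hpq hx
      | cons y s =>
          have hm1 : p < (p + q) / 2 := by linarith
          have hm2 : (p + q) / 2 < q := by linarith
          have e1 : ExGB (Set.Ico p ((p + q) / 2)) (Iq x) := exGB_Ico hm1 hx
          have e2 : ExGB (Set.Ico ((p + q) / 2) q) (DU (y :: s)) :=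
            ih hnt (by simp) _ _ hm2
          have := e1.glue e2 (disj_of_sep (fun z hz => hz.2) (fun z hz => hz.1)) hdisj
          rwa [Set.Ico_union_Ico_eq_Ico hm1.le hm2.le] at this

lemma exGB_DU_DU : ∀ l₁ : List (ℚ × ℚ), NiceL l₁ → l₁ ≠ [] →
    ∀ l₂ : List (ℚ × ℚ), NiceL l₂ → l₂ ≠ [] → ExGB (DU l₁) (DU l₂) := by
  intro l₁
  induction l₁ with
  | nil => intro _ h; exact absurd rfl h
  | cons x t ih =>
      intro hn _ l₂ hn₂ hl₂
      obtain ⟨hnt, hx, hdisj⟩ := niceL_cons hn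
      cases t with
      | nil =>
          have : ExGB (Set.Ico x.1 x.2) (DU l₂) := exGB_Ico_DU l₂ hn₂ hl₂ _ _ hx
          show ExGB (Iq x ∪ DU []) _
          rw [show DU [] = ∅ from rfl, Set.union_empty]
          exact this
      | cons y s =>
          cases l₂ with
          | nil => exact absurd rfl hl₂
          | cons z u =>
              obtain ⟨hnu, hz, hdisj₂⟩ := niceL_cons hn₂
              cases u with
              | nil =>
                  have : ExGB (Set.Ico z.1 z.2) (DU (x :: y :: s)) :=
                    exGB_Ico_DU _ hn (by simp) _ _ hz
                  have h2 := this.symm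
                  show ExGB _ (Iq z ∪ DU [])
                  rw [show DU [] = ∅ from rfl, Set.union_empty]
                  exact h2
              | cons w v =>
                  have e1 : ExGB (Iq x) (Iq z) := exGB_Ico hx hz
                  have e2 : ExGB (DU (y :: s)) (DU (w :: v)) :=
                    ih hnt (by simp) _ hnu (by simp)
                  exact e1.glue e2 hdisj hdisj₂

lemma exGB_Bq {A B : Set ℚ} (hA : A ∈ Bq) (hB : B ∈ Bq) (hA' : A.Nonempty)
    (hB' : B.Nonempty) : ExGB A B := by
  obtain ⟨l₁, hn₁, rfl⟩ := exists_nice hA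
  obtain ⟨l₂, hn₂, rfl⟩ := exists_nice hB
  have h₁ : l₁ ≠ [] := by rintro rfl; simp [DU, Set.nonempty_iff_ne_empty] at hA'
  have h₂ : l₂ ≠ [] := by rintro rfl; simp [DU, Set.nonempty_iff_ne_empty] at hB'
  exact exGB_DU_DU l₁ hn₁ h₁ l₂ hn₂ h₂

lemma exGB_Iio_union {p p' : ℚ} {B : Set ℚ} (hB : B ∈ Bq) (hB' : B ⊆ Set.Ici p') :
    ExGB (Set.Iio p) (Set.Iio p' ∪ B) := by
  obtain ⟨l, hn, rfl⟩ := exists_nice hB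
  cases l with
  | nil =>
      rw [show DU [] = ∅ from rfl, Set.union_empty]
      exact exGB_Iio p p'
  | cons x t =>
      have e1 : ExGB (Set.Iio (p - 1)) (Set.Iio p') := exGB_Iio _ _
      have e2 : ExGB (Set.Ico (p - 1) p) (DU (x :: t)) :=
        exGB_Ico_DU _ hn (by simp) _ _ (by linarith)
      have := e1.glue e2 (disj_of_sep (fun z hz => hz) (fun z hz => hz.1))
        (disj_of_sep (fun z hz => hz) hB')
      rwa [show Set.Iio (p - 1) ∪ Set.Ico (p - 1) p = Set.Iio p by
        ext z
        simp only [Set.mem_union, Set.mem_Iio, Set.mem_Ico]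
        constructor
        · rintro (h | ⟨_, h⟩) <;> linarith
        · intro h
          rcases lt_or_ge z (p - 1) with h' | h'
          · exact Or.inl h'
          · exact Or.inr ⟨h', h⟩] at this

lemma exGB_lo {p p' : ℚ} {A B : Set ℚ} (hA : A ∈ Bq) (hB : B ∈ Bq)
    (hA' : A ⊆ Set.Ici p) (hB' : B ⊆ Set.Ici p') :
    ExGB (Set.Iio p ∪ A) (Set.Iio p' ∪ B) := by
  rcases Set.eq_empty_or_nonempty A with rfl | hAne
  · rcases Set.eq_empty_or_nonempty B with rfl | hBne
    · rw [Set.union_empty, Set.union_empty]; exact exGB_Iio p p'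
    · rw [Set.union_empty]; exact exGB_Iio_union hB hB'
  · rcases Set.eq_empty_or_nonempty B with rfl | hBne
    · rw [Set.union_empty]; exact (exGB_Iio_union hA hA').symm
    · exact (exGB_Iio p p').glue (exGB_Bq hA hB hAne hBne)
        (disj_of_sep (fun z hz => hz) hA') (disj_of_sep (fun z hz => hz) hB')

-- chunk 5
def cellOf {n : ℕ} (a : Fin n → Set ℚ) (c : Fin n → Bool) : Set ℚ :=
  {x | ∀ i, x ∈ a i ↔ c i = true}

lemma mem_cell_iff {n : ℕ} {a : Fin n → Set ℚ} {c : Fin n → Bool} {x : ℚ} :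
    x ∈ cellOf a c ↔ ∀ i, x ∈ (if c i = true then a i else (a i)ᶜ) := by
  constructor
  · intro h i
    by_cases hc : c i = true
    · rw [if_pos hc]; exact (h i).2 hc
    · rw [if_neg hc]; intro hx; exact hc ((h i).1 hx)
  · intro h i
    constructor
    · intro hx
      by_cases hc : c i = true
      · exact hc
      · have := h i; rw [if_neg hc] at this; exact absurd hx this
    · intro hc; have := h i; rw [if_pos hc] at this; exact this

lemma cell_eq_biInter {n : ℕ} {a : Fin n → Set ℚ} {c : Fin n → Bool} :
    cellOf a c = ⋂ i ∈ (Finset.univ : Finset (Fin n)),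
      (if c i = true then a i else (a i)ᶜ) := by
  ext x
  rw [show (x ∈ cellOf a c) ↔ _ from mem_cell_iff]
  simp [Set.mem_iInter]

lemma inter_biInter_mem_Bq {n : ℕ} {a : Fin n → Set ℚ} (ha : ∀ i, a i ∈ Bq)
    (c : Fin n → Bool) :
    ∀ t : Finset (Fin n), ∀ X ∈ Bq,
      (X ∩ ⋂ i ∈ t, (if c i = true then a i else (a i)ᶜ)) ∈ Bq := by
  intro t
  induction t using Finset.induction_on with
  | empty => intro X hX; simpa using hX
  | @insert j t hj ih =>
      intro X hX
      rw [Finset.set_biInter_insert, ← Set.inter_assoc]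
      apply ih
      by_cases hc : c j = true
      · rw [if_pos hc]; exact Bq_inter hX (ha j)
      · rw [if_neg hc, ← Set.diff_eq]
        exact Bq_diff hX (ha j)

lemma cell_mem_Bq {n : ℕ} {a : Fin n → Set ℚ} (ha : ∀ i, a i ∈ Bq) {c : Fin n → Bool}
    (i₀ : Fin n) (h : c i₀ = true) : cellOf a c ∈ Bq := by
  have hsub : cellOf a c ⊆ a i₀ := fun x hx => (hx i₀).2 h
  have heq : cellOf a c = a i₀ ∩ cellOf a c := (Set.inter_eq_self_of_subset_right hsub).symm
  rw [heq, cell_eq_biInter]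
  exact inter_biInter_mem_Bq ha c Finset.univ _ (ha i₀)

lemma mem_cell0_iff {n : ℕ} {a : Fin n → Set ℚ} {x : ℚ} :
    x ∈ cellOf a (fun _ => false) ↔ ∀ i, x ∉ a i := by
  simp [cellOf]

lemma cell0_decomp {n : ℕ} {a : Fin n → Set ℚ} {M : ℚ} (hM : ∀ i, a i ⊆ Set.Ico (-M) M) :
    cellOf a (fun _ => false) =
      (Set.Iio (-M) ∪ (cellOf a (fun _ => false) ∩ Set.Ico (-M) M)) ∪ Set.Ici M := by
  ext x
  simp only [Set.mem_union, Set.mem_inter_iff, Set.mem_Iio, Set.mem_Ico, Set.mem_Ici]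
  constructor
  · intro hx
    rcases lt_or_ge x (-M) with h | h
    · exact Or.inl (Or.inl h)
    · rcases lt_or_ge x M with h' | h'
      · exact Or.inl (Or.inr ⟨hx, h, h'⟩)
      · exact Or.inr h'
  · intro hx
    rw [mem_cell0_iff]
    intro i hmem
    have hsub := hM i hmem
    rcases hx with (h | ⟨h, -⟩) | h
    · exact absurd hsub.1 (not_le.2 h)
    · exact (mem_cell0_iff.1 h i) hmem
    · exact absurd hsub.2 (not_lt.2 h)

lemma cell0_mid_mem_Bq {n : ℕ} {a : Fin n → Set ℚ} (ha : ∀ i, a i ∈ Bq) (M : ℚ) :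
    (cellOf a (fun _ => false) ∩ Set.Ico (-M) M) ∈ Bq := by
  rw [cell_eq_biInter, Set.inter_comm]
  exact inter_biInter_mem_Bq ha _ Finset.univ _ (Ico_mem_Bq _ _)

lemma exGB_cells {n : ℕ} {a b : Fin n → Set ℚ} (ha : ∀ i, a i ∈ Bq) (hb : ∀ i, b i ∈ Bq)
    (hpat : ∀ c : Fin n → Bool, cellOf a c = ∅ ↔ cellOf b c = ∅) (c : Fin n → Bool) :
    ExGB (cellOf a c) (cellOf b c) := by
  by_cases hc : ∃ i₀, c i₀ = true
  · obtain ⟨i₀, hi₀⟩ := hc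
    by_cases hemp : cellOf a c = ∅
    · rw [hemp, (hpat c).1 hemp]; exact exGB_empty
    · have hempb : cellOf b c ≠ ∅ := fun h => hemp ((hpat c).2 h)
      exact exGB_Bq (cell_mem_Bq ha i₀ hi₀) (cell_mem_Bq hb i₀ hi₀)
        (Set.nonempty_iff_ne_empty.2 hemp) (Set.nonempty_iff_ne_empty.2 hempb)
  · have hc0 : c = fun _ => false := by
      funext i
      cases hci : c i
      · rfl
      · exact absurd ⟨i, hci⟩ hc
    subst hc0
    choose Fa hFa using fun i => Bq_bound (ha i)
    choose Fb hFb using fun i => Bq_bound (hb i)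
    set M : ℚ := ∑ i : Fin n, (Fa i + Fb i) with hMdef
    have hM0 : 0 ≤ M :=
      Finset.sum_nonneg fun i _ => add_nonneg (hFa i).1 (hFb i).1
    have hMa : ∀ i, a i ⊆ Set.Ico (-M) M := by
      intro i
      refine (hFa i).2.trans (Set.Ico_subset_Ico ?_ ?_)
      · simp only [neg_le_neg_iff]
        calc Fa i ≤ Fa i + Fb i := le_add_of_nonneg_right (hFb i).1
          _ ≤ M := Finset.single_le_sum (fun j _ => add_nonneg (hFa j).1 (hFb j).1)
              (Finset.mem_univ i)
      · calc Fa i ≤ Fa i + Fb i := le_add_of_nonneg_right (hFb i).1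
          _ ≤ M := Finset.single_le_sum (fun j _ => add_nonneg (hFa j).1 (hFb j).1)
              (Finset.mem_univ i)
    have hMb : ∀ i, b i ⊆ Set.Ico (-M) M := by
      intro i
      refine (hFb i).2.trans (Set.Ico_subset_Ico ?_ ?_)
      · simp only [neg_le_neg_iff]
        calc Fb i ≤ Fa i + Fb i := le_add_of_nonneg_left (hFa i).1
          _ ≤ M := Finset.single_le_sum (fun j _ => add_nonneg (hFa j).1 (hFb j).1)
              (Finset.mem_univ i)
      · calc Fb i ≤ Fa i + Fb i := le_add_of_nonneg_left (hFa i).1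
          _ ≤ M := Finset.single_le_sum (fun j _ => add_nonneg (hFa j).1 (hFb j).1)
              (Finset.mem_univ i)
    rw [cell0_decomp hMa, cell0_decomp hMb]
    have hmidA := cell0_mid_mem_Bq ha M
    have hmidB := cell0_mid_mem_Bq hb M
    refine ExGB.glue (exGB_lo hmidA hmidB ?_ ?_) (exGB_Ici M M) ?_ ?_
    · exact fun x hx => hx.2.1
    · exact fun x hx => hx.2.1
    · rw [Set.disjoint_union_left]
      constructor
      · exact disj_of_sep (fun x hx => lt_of_lt_of_le (Set.mem_Iio.1 hx) (neg_le_self hM0)) (fun x hx => hx)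
      · exact disj_of_sep (fun x hx => hx.2.2) (fun x hx => hx)
    · rw [Set.disjoint_union_left]
      constructor
      · exact disj_of_sep (fun x hx => lt_of_lt_of_le (Set.mem_Iio.1 hx) (neg_le_self hM0)) (fun x hx => hx)
      · exact disj_of_sep (fun x hx => hx.2.2) (fun x hx => hx)

def chi {n : ℕ} (a : Fin n → Set ℚ) (x : ℚ) : Fin n → Bool :=
  fun i => if x ∈ a i then true else false

lemma mem_cell_chi {n : ℕ} {a : Fin n → Set ℚ} {x : ℚ} : x ∈ cellOf a (chi a x) := by
  intro i
  by_cases h : x ∈ a i <;> simp [chi, h]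

lemma chi_eq_of_mem_cell {n : ℕ} {a : Fin n → Set ℚ} {c : Fin n → Bool} {x : ℚ}
    (h : x ∈ cellOf a c) : chi a x = c := by
  funext i
  by_cases hx : x ∈ a i
  · simp only [chi, if_pos hx]
    exact ((h i).1 hx).symm
  · simp only [chi, if_neg hx]
    cases hci : c i
    · rfl
    · exact absurd ((h i).2 hci) hx

lemma Bq_biUnion {ι : Type} [Fintype ι] (s : Finset ι) (f : ι → Set ℚ)
    (h : ∀ i ∈ s, f i ∈ Bq) : (⋃ i ∈ s, f i) ∈ Bq := by
  induction s using Finset.induction_on with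
  | empty => simpa using empty_mem_Bq
  | @insert j t hj ih =>
      rw [Finset.set_biUnion_insert]
      exact Bq_union (h j (Finset.mem_insert_self _ _))
        (ih fun i hi => h i (Finset.mem_insert_of_mem hi))

lemma key {n : ℕ} {a b : Fin n → Set ℚ} (ha : ∀ i, a i ∈ Bq) (hb : ∀ i, b i ∈ Bq)
    (hpat : ∀ c : Fin n → Bool, cellOf a c = ∅ ↔ cellOf b c = ∅) :
    ∃ f g : ℚ → ℚ, (∀ x, g (f x) = x) ∧ (∀ y, f (g y) = y) ∧ (∀ i, f '' a i = b i) ∧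
      (∀ A ∈ Bq, f '' A ∈ Bq) ∧ (∀ B ∈ Bq, g '' B ∈ Bq) := by
  have hex : ∀ c : Fin n → Bool, ∃ f g : ℚ → ℚ, IsGB (cellOf a c) (cellOf b c) f g :=
    fun c => exGB_cells ha hb hpat c
  choose F G hFG using hex
  refine ⟨fun x => F (chi a x) x, fun y => G (chi b y) y, ?_, ?_, ?_, ?_, ?_⟩
  · intro x
    have h1 : x ∈ cellOf a (chi a x) := mem_cell_chi
    have h2 := (hFG (chi a x)).mapsf x h1
    have h3 : chi b (F (chi a x) x) = chi a x := chi_eq_of_mem_cell h2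
    show G (chi b (F (chi a x) x)) (F (chi a x) x) = x
    rw [h3]
    exact (hFG _).gf x h1
  · intro y
    have h1 : y ∈ cellOf b (chi b y) := mem_cell_chi
    have h2 := (hFG (chi b y)).mapsg y h1
    have h3 : chi a (G (chi b y) y) = chi b y := chi_eq_of_mem_cell h2
    show F (chi a (G (chi b y) y)) (G (chi b y) y) = y
    rw [h3]
    exact (hFG _).fg y h1
  · intro i
    apply subset_antisymm
    · rintro y ⟨x, hx, rfl⟩
      have h2 := (hFG (chi a x)).mapsf x (mem_cell_chi (a := a) (x := x))
      exact (h2 i).2 (by simp [chi, hx])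
    · intro y hy
      have h1 : y ∈ cellOf b (chi b y) := mem_cell_chi
      have h2 := (hFG (chi b y)).mapsg y h1
      refine ⟨G (chi b y) y, (h2 i).2 (by simp [chi, hy]), ?_⟩
      have h3 : chi a (G (chi b y) y) = chi b y := chi_eq_of_mem_cell h2
      show F (chi a (G (chi b y) y)) (G (chi b y) y) = y
      rw [h3]
      exact (hFG _).fg y h1
  · have hIco : ∀ p q : ℚ, (fun x => F (chi a x) x) '' Set.Ico p q ∈ Bq := by
      intro p q
      have hdec : (fun x => F (chi a x) x) '' Set.Ico p q =
          ⋃ c ∈ (Finset.univ : Finset (Fin n → Bool)),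
            F c '' (Set.Ico p q ∩ cellOf a c) := by
        ext y
        simp only [Set.mem_image, Set.mem_iUnion, Finset.mem_univ, exists_prop, true_and,
          Set.mem_inter_iff, exists_and_left]
        constructor
        · rintro ⟨x, hx, rfl⟩
          exact ⟨chi a x, x, ⟨hx, mem_cell_chi⟩, rfl⟩
        · rintro ⟨c, x, ⟨hx, hc⟩, rfl⟩
          exact ⟨x, hx, by rw [chi_eq_of_mem_cell hc]⟩
      rw [hdec]
      exact Bq_biUnion _ _ fun c _ => (hFG c).goodf p q
    rintro A ⟨l, rfl⟩
    induction l with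
    | nil => simpa [DU] using empty_mem_Bq
    | cons x t ih =>
        rw [DU, Set.image_union]
        exact Bq_union (hIco x.1 x.2) ih
  · have hIco : ∀ p q : ℚ, (fun y => G (chi b y) y) '' Set.Ico p q ∈ Bq := by
      intro p q
      have hdec : (fun y => G (chi b y) y) '' Set.Ico p q =
          ⋃ c ∈ (Finset.univ : Finset (Fin n → Bool)),
            G c '' (Set.Ico p q ∩ cellOf b c) := by
        ext y
        simp only [Set.mem_image, Set.mem_iUnion, Finset.mem_univ, exists_prop, true_and,
          Set.mem_inter_iff, exists_and_left]
        constructor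
        · rintro ⟨x, hx, rfl⟩
          exact ⟨chi b x, x, ⟨hx, mem_cell_chi⟩, rfl⟩
        · rintro ⟨c, x, ⟨hx, hc⟩, rfl⟩
          exact ⟨x, hx, by rw [chi_eq_of_mem_cell hc]⟩
      rw [hdec]
      exact Bq_biUnion _ _ fun c _ => (hFG c).goodg p q
    rintro B ⟨l, rfl⟩
    induction l with
    | nil => simpa [DU] using empty_mem_Bq
    | cons x t ih =>
        rw [DU, Set.image_union]
        exact Bq_union (hIco x.1 x.2) ih

-- chunk 6
def mval (A B : Set ℚ) : Set ℚ :=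
  if A ∩ B = ∅ ∧ A ≠ ∅ ∧ B ≠ ∅ then A ∪ B else ∅

lemma mval_mem {A B : Set ℚ} (hA : A ∈ Bq) (hB : B ∈ Bq) : mval A B ∈ Bq := by
  rw [mval]
  split
  · exact Bq_union hA hB
  · exact empty_mem_Bq

lemma mval_empty_left (B : Set ℚ) : mval ∅ B = ∅ := by
  rw [mval, if_neg]; rintro ⟨-, h, -⟩; exact h rfl

lemma mval_empty_right (A : Set ℚ) : mval A ∅ = ∅ := by
  rw [mval, if_neg]; rintro ⟨-, -, h⟩; exact h rfl

lemma mval_self (A : Set ℚ) : mval A A = ∅ := by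
  rw [mval, if_neg]; rintro ⟨h1, h2, -⟩; rw [Set.inter_self] at h1; exact h2 h1

lemma mval_comm (A B : Set ℚ) : mval A B = mval B A := by
  by_cases h : A ∩ B = ∅ ∧ A ≠ ∅ ∧ B ≠ ∅
  · rw [mval, if_pos h, mval, if_pos ⟨by rw [Set.inter_comm]; exact h.1, h.2.2, h.2.1⟩,
      Set.union_comm]
  · rw [mval, if_neg h, mval, if_neg]
    rintro ⟨h1, h2, h3⟩
    exact h ⟨by rw [Set.inter_comm]; exact h1, h3, h2⟩

lemma mval_mval_left (A B C : Set ℚ) : mval (mval A B) C =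
    if A ∩ B = ∅ ∧ A ∩ C = ∅ ∧ B ∩ C = ∅ ∧ A ≠ ∅ ∧ B ≠ ∅ ∧ C ≠ ∅
    then A ∪ (B ∪ C) else ∅ := by
  by_cases h : A ∩ B = ∅ ∧ A ≠ ∅ ∧ B ≠ ∅
  · have hin : mval A B = A ∪ B := by rw [mval, if_pos h]
    rw [hin, mval]
    by_cases h2 : (A ∪ B) ∩ C = ∅ ∧ A ∪ B ≠ ∅ ∧ C ≠ ∅
    · rw [if_pos h2, if_pos, Set.union_assoc]
      have h3 := h2.1
      rw [Set.union_inter_distrib_right, Set.union_empty_iff] at h3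
      exact ⟨h.1, h3.1, h3.2, h.2.1, h.2.2, h2.2.2⟩
    · rw [if_neg h2, if_neg]
      rintro ⟨h1, hAC, hBC, hA, hB, hC⟩
      apply h2
      refine ⟨?_, ?_, hC⟩
      · rw [Set.union_inter_distrib_right, hAC, hBC, Set.union_empty]
      · intro hU; rw [Set.union_empty_iff] at hU; exact hA hU.1
  · have hin : mval A B = ∅ := by rw [mval, if_neg h]
    rw [hin, mval_empty_left, if_neg]
    rintro ⟨h1, h2, h3, h4, h5, h6⟩
    exact h ⟨h1, h4, h5⟩

lemma mval_mval_right (A B C : Set ℚ) : mval A (mval B C) =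
    if A ∩ B = ∅ ∧ A ∩ C = ∅ ∧ B ∩ C = ∅ ∧ A ≠ ∅ ∧ B ≠ ∅ ∧ C ≠ ∅
    then A ∪ (B ∪ C) else ∅ := by
  by_cases h : B ∩ C = ∅ ∧ B ≠ ∅ ∧ C ≠ ∅
  · have hin : mval B C = B ∪ C := by rw [mval, if_pos h]
    rw [hin, mval]
    by_cases h2 : A ∩ (B ∪ C) = ∅ ∧ A ≠ ∅ ∧ B ∪ C ≠ ∅
    · rw [if_pos h2, if_pos]
      have h3 := h2.1
      rw [Set.inter_union_distrib_left, Set.union_empty_iff] at h3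
      exact ⟨h3.1, h3.2, h.1, h2.2.1, h.2.1, h.2.2⟩
    · rw [if_neg h2, if_neg]
      rintro ⟨hAB, hAC, hBC, hA, hB, hC⟩
      apply h2
      refine ⟨?_, hA, ?_⟩
      · rw [Set.inter_union_distrib_left, hAB, hAC, Set.union_empty]
      · intro hU; rw [Set.union_empty_iff] at hU; exact hB hU.1
  · have hin : mval B C = ∅ := by rw [mval, if_neg h]
    rw [hin, mval_empty_right, if_neg]
    rintro ⟨h1, h2, h3, h4, h5, h6⟩
    exact h ⟨h3, h5, h6⟩

def Sq : Type := {A : Set ℚ // A ∈ Bq}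

noncomputable instance : Semigroup Sq where
  mul x y := ⟨mval x.1 y.1, mval_mem x.2 y.2⟩
  mul_assoc x y z := Subtype.ext (by
    show mval (mval x.1 y.1) z.1 = mval x.1 (mval y.1 z.1)
    rw [mval_mval_left, mval_mval_right])

lemma mul_val (x y : Sq) : (x * y).1 = mval x.1 y.1 := rfl

def zSq : Sq := ⟨∅, empty_mem_Bq⟩

lemma split_lemma {A : Set ℚ} (hA : A ∈ Bq) (hne : A.Nonempty) :
    ∃ A₁ A₂ : Set ℚ, A₁ ∈ Bq ∧ A₂ ∈ Bq ∧ A₁.Nonempty ∧ A₂.Nonempty ∧ A₁ ∩ A₂ = ∅ ∧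
      A₁ ∪ A₂ = A := by
  obtain ⟨l, ⟨hlp, hlne⟩, rfl⟩ := exists_nice hA
  obtain ⟨x₀, hx₀⟩ := hne
  obtain ⟨p, hp, hxp⟩ := DU_mem_iff.1 hx₀
  obtain ⟨M, hM0, hMb⟩ := Bq_bound (⟨l, rfl⟩ : DU l ∈ Bq)
  have hplt : p.1 < p.2 := hlne p hp
  have h1 : p.1 < (p.1 + p.2) / 2 := by linarith
  have h2 : (p.1 + p.2) / 2 < p.2 := by linarith
  have hp1A : p.1 ∈ DU l := Iq_subset_DU hp ⟨le_refl _, hplt⟩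
  have hmA : (p.1 + p.2) / 2 ∈ DU l := Iq_subset_DU hp ⟨h1.le, h2⟩
  have hbp1 := hMb hp1A
  have hbm := hMb hmA
  refine ⟨DU l ∩ Set.Ico (-M) ((p.1 + p.2) / 2), DU l ∩ Set.Ico ((p.1 + p.2) / 2) M,
    Bq_inter ⟨l, rfl⟩ (Ico_mem_Bq _ _), Bq_inter ⟨l, rfl⟩ (Ico_mem_Bq _ _),
    ⟨p.1, hp1A, hbp1.1, h1⟩, ⟨(p.1 + p.2) / 2, hmA, le_refl _, hbm.2⟩, ?_, ?_⟩
  · apply Set.eq_empty_iff_forall_notMem.2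
    rintro x ⟨⟨-, -, hxm⟩, -, hmx, -⟩
    exact absurd hmx (not_le.2 hxm)
  · rw [← Set.inter_union_distrib_left,
      Set.Ico_union_Ico_eq_Ico (by linarith [hbm.1] : -M ≤ (p.1 + p.2) / 2) hbm.2.le]
    exact Set.inter_eq_self_of_subset_left hMb

lemma exists_mul_eq (x : Sq) : ∃ u v : Sq, x = u * v := by
  rcases Set.eq_empty_or_nonempty x.1 with h | h
  · refine ⟨⟨Set.Ico 0 1, Ico_mem_Bq 0 1⟩, ⟨Set.Ico 0 1, Ico_mem_Bq 0 1⟩, ?_⟩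
    apply Subtype.ext
    exact h.trans (mval_self _).symm
  · obtain ⟨A₁, A₂, hB1, hB2, hne1, hne2, hdisj, huni⟩ := split_lemma x.2 h
    refine ⟨⟨A₁, hB1⟩, ⟨A₂, hB2⟩, Subtype.ext ?_⟩
    show x.1 = mval A₁ A₂
    rw [mval, if_pos ⟨hdisj, Set.nonempty_iff_ne_empty.1 hne1,
      Set.nonempty_iff_ne_empty.1 hne2⟩]
    exact huni.symm

lemma autrel_aux {n : ℕ} (u v : Fin n → Sq)
    (hpat : ∀ c, cellOf (fun i => (u i).1) c = ∅ ↔ cellOf (fun i => (v i).1) c = ∅) :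
    ∃ φ : Sq ≃* Sq, ∀ k, φ (u k) = v k := by
  obtain ⟨f, g, hgf, hfg, himg, hBf, hBg⟩ := key (fun i => (u i).2) (fun i => (v i).2) hpat
  have hinj : Function.Injective f := Function.LeftInverse.injective hgf
  have hGF : ∀ A : Set ℚ, g '' (f '' A) = A := by
    intro A
    rw [← Set.image_comp, show g ∘ f = id from funext hgf, Set.image_id]
  have hFG : ∀ A : Set ℚ, f '' (g '' A) = A := by
    intro A
    rw [← Set.image_comp, show f ∘ g = id from funext hfg, Set.image_id]
  have hmul : ∀ A B : Set ℚ, f '' mval A B = mval (f '' A) (f '' B) := by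
    intro A B
    by_cases h : A ∩ B = ∅ ∧ A ≠ ∅ ∧ B ≠ ∅
    · rw [mval, if_pos h, Set.image_union, mval, if_pos]
      refine ⟨?_, ?_, ?_⟩
      · rw [← Set.image_inter hinj, h.1, Set.image_empty]
      · rw [Ne, Set.image_eq_empty]; exact h.2.1
      · rw [Ne, Set.image_eq_empty]; exact h.2.2
    · rw [mval, if_neg h, Set.image_empty, mval, if_neg]
      rintro ⟨h1, h2, h3⟩
      apply h
      refine ⟨?_, ?_, ?_⟩
      · have : f '' (A ∩ B) = ∅ := by rw [Set.image_inter hinj, h1]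
        exact Set.image_eq_empty.1 this
      · intro h0; exact h2 (by rw [h0, Set.image_empty])
      · intro h0; exact h3 (by rw [h0, Set.image_empty])
  refine ⟨⟨⟨fun x => ⟨f '' x.1, hBf _ x.2⟩, fun y => ⟨g '' y.1, hBg _ y.2⟩, ?_, ?_⟩, ?_⟩, ?_⟩
  · intro x; exact Subtype.ext (hGF x.1)
  · intro y; exact Subtype.ext (hFG y.1)
  · intro x y; exact Subtype.ext (hmul x.1 y.1)
  · intro k; exact Subtype.ext (himg k)


/-- There exists a countably infinite commutative semigroup `S` with zero `z` which is
ℵ₀-categorical, nil of degree 2 (`a * a = z` for all `a`), satisfies `S·S = S`, and is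
not nilpotent (`S^n ≠ {z}` for all `n ≥ 1`). -/
theorem exists_aleph0Categorical_nil_not_nilpotent :
    ∃ (S : Type) (_ : Semigroup S) (z : S),
      Countable S ∧ Infinite S ∧
      (∀ a b : S, a * b = b * a) ∧
      (∀ x : S, z * x = z ∧ x * z = z) ∧
      Aleph0Categorical S ∧
      (∀ a : S, a * a = z) ∧
      {x : S | ∃ a b : S, x = a * b} = Set.univ ∧
      ∀ n : ℕ, prodSet S n ≠ {z} := by
  refine ⟨Sq, inferInstance, zSq, ?_, ?_, ?_, ?_, ?_, ?_, ?_, ?_⟩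
  · have h : Bq.Countable := Set.countable_range DU
    exact h.to_subtype
  · refine Infinite.of_injective (fun k : ℕ => (⟨Set.Ico 0 (k + 1 : ℚ), Ico_mem_Bq _ _⟩ : Sq)) ?_
    intro k m h
    have h' : Set.Ico (0 : ℚ) (k + 1) = Set.Ico (0 : ℚ) (m + 1) := congrArg Subtype.val h
    have hk : (k : ℚ) ∈ Set.Ico (0 : ℚ) (k + 1) := ⟨Nat.cast_nonneg k, by linarith⟩
    have hm : (m : ℚ) ∈ Set.Ico (0 : ℚ) (m + 1) := ⟨Nat.cast_nonneg m, by linarith⟩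
    rw [h'] at hk
    rw [← h'] at hm
    have h1 : (k : ℚ) < m + 1 := hk.2
    have h2 : (m : ℚ) < k + 1 := hm.2
    have h1' : k < m + 1 := by exact_mod_cast h1
    have h2' : m < k + 1 := by exact_mod_cast h2
    omega
  · intro a b; exact Subtype.ext (mval_comm a.1 b.1)
  · intro x
    exact ⟨Subtype.ext (mval_empty_left x.1), Subtype.ext (mval_empty_right x.1)⟩
  · intro n hn
    set pat : (Fin n → Sq) → ((Fin n → Bool) → Bool) :=
      fun v c => if cellOf (fun i => (v i).1) c = ∅ then true else false with hpatdef
    have hpat_eq : ∀ u v : Fin n → Sq, pat u = pat v →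
        ∀ c, cellOf (fun i => (u i).1) c = ∅ ↔ cellOf (fun i => (v i).1) c = ∅ := by
      intro u v h c
      have hc := congrFun h c
      constructor
      · intro hu
        by_contra hv
        simp only [hpatdef, if_pos hu, if_neg hv] at hc
        exact Bool.noConfusion hc
      · intro hv
        by_contra hu
        simp only [hpatdef, if_pos hv, if_neg hu] at hc
        exact Bool.noConfusion hc
    have hfin : (Set.range pat).Finite :=
      Set.Finite.subset (Set.finite_univ (α := (Fin n → Bool) → Bool)) (Set.subset_univ _)
    set sec : ((Fin n → Bool) → Bool) → (Fin n → Sq) :=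
      fun P => if h : ∃ v, pat v = P then h.choose else fun _ => zSq with hsecdef
    refine ⟨sec '' Set.range pat, hfin.image sec, ?_⟩
    intro a
    have hex : ∃ v, pat v = pat a := ⟨a, rfl⟩
    refine ⟨sec (pat a), Set.mem_image_of_mem sec (Set.mem_range_self a), ?_⟩
    have hsec : pat (sec (pat a)) = pat a := by
      simp only [hsecdef, dif_pos hex]
      exact hex.choose_spec
    exact autrel_aux _ _ (hpat_eq _ _ hsec)
  · intro a; exact Subtype.ext (mval_self a.1)
  · apply Set.eq_univ_of_forall
    intro x
    obtain ⟨u, v, h⟩ := exists_mul_eq x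
    exact ⟨u, v, h⟩
  · have hall : ∀ n : ℕ, prodSet Sq n = Set.univ := by
      intro n
      induction n with
      | zero => rfl
      | succ n ih =>
          apply Set.eq_univ_of_forall
          intro x
          obtain ⟨u, v, h⟩ := exists_mul_eq x
          exact ⟨u, by rw [ih]; trivial, v, h⟩
    intro n h
    rw [hall n] at h
    have h2 : (⟨Set.Ico 0 1, Ico_mem_Bq 0 1⟩ : Sq) = zSq := by
      exact Set.mem_singleton_iff.1 (h ▸ Set.mem_univ (⟨Set.Ico 0 1, Ico_mem_Bq 0 1⟩ : Sq))
    have h3 : Set.Ico (0 : ℚ) 1 = ∅ := congrArg Subtype.val h2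
    have h4 : (0 : ℚ) ∈ Set.Ico (0 : ℚ) 1 := ⟨le_refl _, one_pos⟩
    rw [h3] at h4
    exact h4

end AFSG
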